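/- In an implicative aBE algebra, for all x, y: ((x → y) → y) → x = ((x → y) → y) → (y → x). -/
import Mathlib


class ImplicativeABE (X : Type*) where
  imp : X → X → X
  one : X
  one_imp : ∀ x, imp one x = x
  imp_one : ∀ x, imp x one = one
  imp_self : ∀ x, imp x x = one
  exch : ∀ x y z, imp x (imp y z) = imp y (imp x z)
  antisymm : ∀ x y, imp x y = one → imp y x = one → x = y
  implicative : ∀ x y, imp (imp x y) x = x

infixr:60 " ⮕ " => ImplicativeABE.imp
notation "𝟙" => ImplicativeABE.one

namespace ImplicativeABE

variable {X : Type*} [ImplicativeABE X]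

/-- `((u→z)→z)→z = u→z` -/
lemma L3 (u z : X) : ((u ⮕ z) ⮕ z) ⮕ z = u ⮕ z := by
  apply antisymm
  · calc (((u ⮕ z) ⮕ z) ⮕ z) ⮕ (u ⮕ z)
        = (((u ⮕ z) ⮕ z) ⮕ z) ⮕ (((u ⮕ z) ⮕ z) ⮕ (u ⮕ z)) := by
          rw [implicative (u ⮕ z) z]
      _ = (((u ⮕ z) ⮕ z) ⮕ z) ⮕ (u ⮕ (((u ⮕ z) ⮕ z) ⮕ z)) := by
          rw [exch ((u ⮕ z) ⮕ z) u z]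
      _ = u ⮕ ((((u ⮕ z) ⮕ z) ⮕ z) ⮕ (((u ⮕ z) ⮕ z) ⮕ z)) := by
          rw [exch (((u ⮕ z) ⮕ z) ⮕ z) u (((u ⮕ z) ⮕ z) ⮕ z)]
      _ = u ⮕ 𝟙 := by rw [imp_self]
      _ = 𝟙 := imp_one u
  · calc (u ⮕ z) ⮕ (((u ⮕ z) ⮕ z) ⮕ z)
        = ((u ⮕ z) ⮕ z) ⮕ ((u ⮕ z) ⮕ z) := exch (u ⮕ z) ((u ⮕ z) ⮕ z) z
      _ = 𝟙 := imp_self _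

end ImplicativeABE

theorem stmt8 {X : Type*} [ImplicativeABE X] (x y : X) :
    ((x ⮕ y) ⮕ y) ⮕ x = ((x ⮕ y) ⮕ y) ⮕ (y ⮕ x) := by
  open ImplicativeABE in
  set a : X := (x ⮕ y) ⮕ y with ha
  set v : X := a ⮕ x with hv
  set w : X := v ⮕ y with hw
  set g : X := w ⮕ y with hg
  have h_ay : a ⮕ y = x ⮕ y := L3 x y
  have h_gy : g ⮕ y = w := L3 v y
  have h_ga : g ⮕ a = a := by
    calc g ⮕ ((x ⮕ y) ⮕ y) = (x ⮕ y) ⮕ (g ⮕ y) := exch g (x ⮕ y) y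
      _ = (x ⮕ y) ⮕ (v ⮕ y) := by rw [h_gy]
      _ = v ⮕ ((x ⮕ y) ⮕ y) := exch (x ⮕ y) v y
      _ = (a ⮕ x) ⮕ a := rfl
      _ = a := implicative a x
  have h1 : a ⮕ g = g := by
    conv_rhs => rw [← implicative g a, h_ga]
  have h2 : a ⮕ g = x ⮕ g := by
    calc a ⮕ (w ⮕ y) = w ⮕ (a ⮕ y) := exch a w y
      _ = w ⮕ (x ⮕ y) := by rw [h_ay]
      _ = x ⮕ (w ⮕ y) := exch w x y
  have h3 : g = x ⮕ g := by rw [← h2, h1]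
  have h_gx : g ⮕ x = x := by
    conv_lhs => rw [h3]
    exact implicative x g
  have h_gv : g ⮕ v = v := by
    calc g ⮕ (a ⮕ x) = a ⮕ (g ⮕ x) := exch g a x
      _ = a ⮕ x := by rw [h_gx]
  have h4 : g = v ⮕ g := by
    conv_lhs => rw [← implicative g v, h_gv]
  have h5 : v ⮕ g = 𝟙 := by
    calc v ⮕ (w ⮕ y) = w ⮕ (v ⮕ y) := exch v w y
      _ = w ⮕ w := rfl
      _ = 𝟙 := imp_self w
  have hg1 : g = 𝟙 := h4.trans h5
  have hwy : v ⮕ y = y := by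
    apply ImplicativeABE.antisymm
    · exact hg1
    · calc y ⮕ (v ⮕ y) = v ⮕ (y ⮕ y) := exch y v y
        _ = v ⮕ 𝟙 := by rw [ImplicativeABE.imp_self y]
        _ = 𝟙 := imp_one v
  have hyv : y ⮕ v = v := by
    conv_rhs => rw [← implicative v y, hwy]
  calc a ⮕ x = v := rfl
    _ = y ⮕ v := hyv.symm
    _ = y ⮕ (a ⮕ x) := rfl
    _ = a ⮕ (y ⮕ x) := exch y a x
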